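/- Let n ≥ 3 be an integer. Then d(r) = (2/√(n−2)) √(r−1) + o(√(r−1)) as r → 1⁺ (i.e. (d(r) − (2/√(n−2))√(r−1))/√(r−1) → 0 as r → 1⁺), and d(r)/r → 1 as r → ∞. -/

import Mathlib

open Filter

/-- The Riemannian distance from the event horizon:
`d(r) = ∫₁^r √(ξ^(n−2)/(ξ^(n−2)−1)) dξ`. -/
noncomputable def schDist (n : ℕ) (r : ℝ) : ℝ :=
  ∫ ξ in (1 : ℝ)..r, Real.sqrt (ξ ^ (n - 2) / (ξ ^ (n - 2) - 1))

open MeasureTheory Set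

/-- integrand -/
noncomputable def schF (m : ℕ) (ξ : ℝ) : ℝ := Real.sqrt (ξ ^ m / (ξ ^ m - 1))

/-- regular factor -/
noncomputable def schG (m : ℕ) (ξ : ℝ) : ℝ :=
  Real.sqrt (ξ ^ m / (∑ k ∈ Finset.range m, ξ ^ k))

/-- singular factor -/
noncomputable def schH (ξ : ℝ) : ℝ := (Real.sqrt (ξ - 1))⁻¹

lemma schH_nonneg (x : ℝ) : 0 ≤ schH x := inv_nonneg.2 (Real.sqrt_nonneg _)

lemma schSum_pos {m : ℕ} (hm : m ≠ 0) {ξ : ℝ} (hξ : 1 ≤ ξ) :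
    0 < ∑ k ∈ Finset.range m, ξ ^ k := by
  apply Finset.sum_pos
  · intro k _
    positivity
  · exact Finset.nonempty_range_iff.2 hm

lemma schG_contOn {m : ℕ} (hm : m ≠ 0) : ContinuousOn (schG m) (Set.Ici 1) := by
  apply ContinuousOn.sqrt
  apply ContinuousOn.div
  · exact (continuous_pow m).continuousOn
  · exact (continuous_finset_sum _ fun k _ => continuous_pow k).continuousOn
  · intro x hx
    exact (schSum_pos hm hx).ne'

lemma schF_factor {m : ℕ} (hm : m ≠ 0) {ξ : ℝ} (hξ : 1 ≤ ξ) :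
    schF m ξ = schG m ξ * schH ξ := by
  rcases eq_or_lt_of_le hξ with h | h
  · subst h
    simp [schF, schH]
  · have hS : 0 < ∑ k ∈ Finset.range m, ξ ^ k := schSum_pos hm hξ
    have hfac : ξ ^ m - 1 = (∑ k ∈ Finset.range m, ξ ^ k) * (ξ - 1) := (geom_sum_mul ξ m).symm
    have hξ1 : 0 < ξ - 1 := by linarith
    have : ξ ^ m / (ξ ^ m - 1) = (ξ ^ m / ∑ k ∈ Finset.range m, ξ ^ k) * (ξ - 1)⁻¹ := by
      rw [hfac]; field_simp
    rw [schF, this, Real.sqrt_mul (by positivity), Real.sqrt_inv, schG, schH]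

lemma schH_intable {r : ℝ} (hr : 1 ≤ r) :
    IntervalIntegrable schH volume 1 r := by
  have h0 : IntervalIntegrable (fun x : ℝ => x ^ (-(1/2) : ℝ)) volume 0 (r - 1) :=
    intervalIntegral.intervalIntegrable_rpow' (by norm_num)
  have h1 := h0.comp_sub_right 1
  rw [zero_add] at h1
  have h1' : IntervalIntegrable (fun x : ℝ => (x - 1) ^ (-(1/2) : ℝ)) volume 1 r := by
    simpa using h1
  apply h1'.congr
  intro x hx
  dsimp only
  rw [Set.uIoc_of_le hr] at hx
  have hx1 : (0:ℝ) < x - 1 := by linarith [hx.1]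
  rw [schH, Real.sqrt_eq_rpow, ← Real.rpow_neg hx1.le]

lemma schH_integral {r : ℝ} (hr : 1 ≤ r) :
    ∫ x in (1:ℝ)..r, schH x = 2 * Real.sqrt (r - 1) := by
  have hcong : Set.EqOn schH (fun x : ℝ => (x - 1) ^ (-(1/2) : ℝ)) (Set.uIcc 1 r) := by
    intro x hx
    rw [Set.uIcc_of_le hr] at hx
    rcases eq_or_lt_of_le hx.1 with h | h
    · simp [schH, ← h, Real.zero_rpow (by norm_num : (-(1/2):ℝ) ≠ 0)]
    · have hx1 : (0:ℝ) < x - 1 := by linarith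
      rw [schH, Real.sqrt_eq_rpow, ← Real.rpow_neg hx1.le]
  rw [intervalIntegral.integral_congr hcong]
  have := intervalIntegral.integral_comp_sub_right (fun x : ℝ => x ^ (-(1/2) : ℝ)) 1
    (a := 1) (b := r)
  simp only [sub_self] at this
  rw [this, integral_rpow (Or.inl (by norm_num))]
  norm_num [Real.sqrt_eq_rpow]
  ring

lemma schF_intable {m : ℕ} (hm : m ≠ 0) {r : ℝ} (hr : 1 ≤ r) :
    IntervalIntegrable (schF m) volume 1 r := by
  have h := (schH_intable hr).continuousOn_mul
    ((schG_contOn hm).mono (by rw [Set.uIcc_of_le hr]; exact fun x hx => hx.1))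
  apply h.congr
  intro x hx
  dsimp only
  rw [Set.uIoc_of_le hr] at hx
  exact (schF_factor hm (le_of_lt hx.1)).symm

lemma schDist_eq (n : ℕ) (r : ℝ) : schDist n r = ∫ x in (1:ℝ)..r, schF (n-2) x := rfl


/-- `d(r) = (2/√(n−2)) √(r−1) + o(√(r−1))` as `r → 1⁺`,
and `d(r)/r → 1` as `r → ∞`. -/
theorem schDist_asymptotics (n : ℕ) (hn : 3 ≤ n) :
    Filter.Tendsto
      (fun r : ℝ =>
        (schDist n r - 2 / Real.sqrt ((n : ℝ) - 2) * Real.sqrt (r - 1)) / Real.sqrt (r - 1))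
      (nhdsWithin 1 (Set.Ioi 1)) (nhds 0) ∧
    Filter.Tendsto (fun r : ℝ => schDist n r / r) Filter.atTop (nhds 1) := by
  set m : ℕ := n - 2 with hmdef
  have hm : m ≠ 0 := by omega
  have hcast : ((n : ℝ) - 2) = (m : ℝ) := by
    have h2n : 2 ≤ n := by omega
    rw [hmdef]
    push_cast [Nat.cast_sub h2n]
    ring
  have hg1 : schG m 1 = (Real.sqrt (m : ℝ))⁻¹ := by
    rw [schG]
    simp [one_div, Real.sqrt_inv]
  constructor
  · -- asymptotics at 1⁺
    rw [Metric.tendsto_nhdsWithin_nhds]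
    intro ε hε
    have hcw : ContinuousWithinAt (schG m) (Set.Ici 1) 1 :=
      (schG_contOn hm).continuousWithinAt (by norm_num)
    rw [Metric.continuousWithinAt_iff] at hcw
    obtain ⟨δ, hδ, hδ'⟩ := hcw (ε/3) (by linarith)
    refine ⟨δ, hδ, fun r hr hrd => ?_⟩
    have hr1 : (1:ℝ) < r := hr
    have hs : 0 < Real.sqrt (r - 1) := Real.sqrt_pos.2 (by linarith)
    have hint := schH_intable hr1.le
    have hFint := schF_intable hm hr1.le
    have hrd' : r - 1 < δ := by
      rw [Real.dist_eq, abs_of_nonneg (by linarith : (0:ℝ) ≤ r - 1)] at hrd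
      exact hrd
    have heq : schDist n r - 2 / Real.sqrt ((n:ℝ) - 2) * Real.sqrt (r - 1)
        = ∫ x in (1:ℝ)..r, (schF m x - schG m 1 * schH x) := by
      rw [intervalIntegral.integral_sub hFint (hint.const_mul _),
        intervalIntegral.integral_const_mul, schH_integral hr1.le, schDist_eq, ← hmdef,
        hcast, hg1]
      ring
    have hb : ∀ x ∈ Set.Icc (1:ℝ) r, |schF m x - schG m 1 * schH x| ≤ ε/3 * schH x := by
      intro x hx
      rw [schF_factor hm hx.1, ← sub_mul, abs_mul,
        abs_of_nonneg (schH_nonneg x)]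
      apply mul_le_mul_of_nonneg_right _ (schH_nonneg x)
      have hxd : dist x 1 < δ := by
        rw [Real.dist_eq, abs_of_nonneg (by linarith [hx.1] : (0:ℝ) ≤ x - 1)]
        linarith [hx.2]
      have := hδ' hx.1 hxd
      rw [Real.dist_eq] at this
      linarith [this]
    have habs : |∫ x in (1:ℝ)..r, (schF m x - schG m 1 * schH x)|
        ≤ ε/3 * (2 * Real.sqrt (r-1)) := by
      calc |∫ x in (1:ℝ)..r, (schF m x - schG m 1 * schH x)|
          ≤ ∫ x in (1:ℝ)..r, |schF m x - schG m 1 * schH x| :=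
            intervalIntegral.abs_integral_le_integral_abs hr1.le
        _ ≤ ∫ x in (1:ℝ)..r, ε/3 * schH x :=
            intervalIntegral.integral_mono_on hr1.le
              ((hFint.sub (hint.const_mul _)).abs) (hint.const_mul _) hb
        _ = ε/3 * (2 * Real.sqrt (r-1)) := by
            rw [intervalIntegral.integral_const_mul, schH_integral hr1.le]
    have hd : dist ((schDist n r - 2 / Real.sqrt ((n:ℝ) - 2) * Real.sqrt (r - 1))
        / Real.sqrt (r - 1)) 0
        = |schDist n r - 2 / Real.sqrt ((n:ℝ) - 2) * Real.sqrt (r - 1)| / Real.sqrt (r-1) := by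
      rw [Real.dist_eq, sub_zero, abs_div, abs_of_nonneg hs.le]
    rw [hd, div_lt_iff₀ hs]
    calc |schDist n r - 2 / Real.sqrt ((n:ℝ) - 2) * Real.sqrt (r - 1)|
        ≤ ε/3 * (2 * Real.sqrt (r-1)) := by rw [heq]; exact habs
      _ < ε * Real.sqrt (r-1) := by nlinarith [hs, hε]
  · -- asymptotics at ∞
    rw [Metric.tendsto_atTop]
    intro ε hε
    set a : ℝ := max 2 (1 + 2/ε) with ha
    have ha2 : (2:ℝ) ≤ a := le_max_left _ _
    have ha1 : (1:ℝ) < a := by linarith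
    have hainv : 1 + 2/ε ≤ a := le_max_right _ _
    have ham : 1 + 2/ε ≤ a ^ m := le_trans hainv (le_self_pow₀ (by linarith) hm)
    have hεd : (0:ℝ) < 2/ε := by positivity
    have hpos : (0:ℝ) < a ^ m - 1 := by linarith
    have hc : ∀ x : ℝ, a ≤ x → schF m x ≤ 1 + ε/2 := by
      intro x hx
      have hx1 : (1:ℝ) < x := lt_of_lt_of_le ha1 hx
      have hxm : a ^ m ≤ x ^ m := pow_le_pow_left₀ (by linarith) hx m
      have hxpos : (0:ℝ) < x ^ m - 1 := by linarith
      have hdiv : x ^ m / (x ^ m - 1) ≤ 1 + ε/2 := by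
        have hx' : x ^ m / (x ^ m - 1) = 1 + 1/(x ^ m - 1) := by field_simp; ring
        rw [hx']
        have h2 : 1/(x ^ m - 1) ≤ 1/(a ^ m - 1) :=
          one_div_le_one_div_of_le hpos (by linarith)
        have h1 : 1/(a ^ m - 1) ≤ ε/2 := by
          rw [div_le_iff₀ hpos]
          have h3 : 2/ε ≤ a ^ m - 1 := by linarith
          have h4 := mul_le_mul_of_nonneg_left h3 (le_of_lt (by positivity : (0:ℝ) < ε/2))
          calc (1:ℝ) = ε/2 * (2/ε) := by field_simp
            _ ≤ _ := h4
        linarith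
      calc schF m x = Real.sqrt (x ^ m / (x ^ m - 1)) := rfl
        _ ≤ Real.sqrt (1 + ε/2) := Real.sqrt_le_sqrt hdiv
        _ ≤ 1 + ε/2 := by
            have h := Real.sqrt_le_sqrt (show (1+ε/2) ≤ (1+ε/2)^2 by nlinarith)
            rwa [Real.sqrt_sq (by linarith)] at h
    have hlow : ∀ r : ℝ, 1 ≤ r → r - 1 ≤ schDist n r := by
      intro r hr
      rw [schDist_eq, ← hmdef]
      have h1 : (r - 1 : ℝ) = ∫ _x in (1:ℝ)..r, (1:ℝ) := by simp
      rw [h1]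
      apply intervalIntegral.integral_mono_ae_restrict hr intervalIntegrable_const
        (schF_intable hm hr)
      have hne : ∀ᵐ x ∂(volume : Measure ℝ), x ≠ (1:ℝ) := by
        rw [MeasureTheory.ae_iff]
        simp
      filter_upwards [ae_restrict_mem measurableSet_Icc, ae_restrict_of_ae hne] with x hx hx1
      have hx1' : (1:ℝ) < x := lt_of_le_of_ne hx.1 (Ne.symm hx1)
      have hxm : (1:ℝ) < x ^ m := one_lt_pow₀ hx1' hm
      apply Real.one_le_sqrt.2
      rw [le_div_iff₀ (by linarith)]
      linarith
    have hIa : ∀ r : ℝ, a ≤ r → IntervalIntegrable (schF m) volume a r := by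
      intro r hr
      apply (schF_intable hm (le_trans ha1.le hr)).mono_set
      rw [Set.uIcc_of_le hr, Set.uIcc_of_le (le_trans ha1.le hr)]
      exact Set.Icc_subset_Icc (by linarith) le_rfl
    have hup : ∀ r : ℝ, a ≤ r → schDist n r ≤ schDist n a + (1 + ε/2) * (r - a) := by
      intro r hr
      have hsplit : schDist n a + ∫ x in a..r, schF m x = schDist n r := by
        rw [schDist_eq, schDist_eq, ← hmdef]
        exact intervalIntegral.integral_add_adjacent_intervals
          (schF_intable hm ha1.le) (hIa r hr)
      rw [← hsplit]
      have hb : ∫ x in a..r, schF m x ≤ (1 + ε/2) * (r - a) := by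
        calc ∫ x in a..r, schF m x ≤ ∫ _x in a..r, (1 + ε/2) :=
              intervalIntegral.integral_mono_on hr (hIa r hr) intervalIntegrable_const
                (fun x hx => hc x hx.1)
          _ = (1 + ε/2) * (r - a) := by rw [intervalIntegral.integral_const]; ring_nf
      linarith
    set K : ℝ := schDist n a with hK
    refine ⟨max a (max (2/ε) (2*(|K|+1)/ε)), fun r hr => ?_⟩
    have hra : a ≤ r := le_trans (le_max_left _ _) hr
    have hr2 : 2/ε ≤ r := le_trans (le_trans (le_max_left _ _) (le_max_right _ _)) hr
    have hr3 : 2*(|K|+1)/ε ≤ r := le_trans (le_trans (le_max_right _ _) (le_max_right _ _)) hr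
    have hr0 : (0:ℝ) < r := by linarith
    have hεr : 2 ≤ ε * r := by
      rw [div_le_iff₀ hε] at hr2
      linarith [hr2]
    have hεr3 : 2*(|K|+1) ≤ ε * r := by
      rw [div_le_iff₀ hε] at hr3
      linarith [hr3]
    rw [Real.dist_eq, abs_sub_lt_iff]
    constructor
    · -- d r / r - 1 < ε
      have h1 := hup r hra
      have h2 : K < ε/2 * r := by
        have : K ≤ |K| := le_abs_self K
        nlinarith
      have h3 : schDist n r < r + ε * r := by nlinarith
      rw [div_sub' hr0.ne', div_lt_iff₀ hr0]
      linarith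
    · -- 1 - d r / r < ε
      have h1 := hlow r (by linarith)
      have h3 : r - ε * r < schDist n r := by nlinarith
      rw [sub_div' hr0.ne', div_lt_iff₀ hr0]
      linarith
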